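/- The determinant of T(x) = M_0 + x M_1 is a polynomial in x of degree at most n-2, and its coefficient of x^k is a homogeneous polynomial of degree n-k in the variables c_1, ..., c_{n+1}. -/

import Mathlib

open Matrix Polynomial

/-- Toeplitz matrix `M0` over a commutative ring. -/
noncomputable def M0R (R : Type*) [CommRing R] (c : ℕ → R) (n : ℕ) :
    Matrix (Fin n) (Fin n) R :=
  fun i j => if (j : ℕ) ≤ (i : ℕ) + 1 then c ((i : ℕ) + 2 - (j : ℕ)) else 0

/-- The matrix `M1` with ones exactly on the second superdiagonal. -/
noncomputable def M1R (R : Type*) [CommRing R] (n : ℕ) : Matrix (Fin n) (Fin n) R :=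
  fun i j => if (j : ℕ) = (i : ℕ) + 2 then 1 else 0

/-- The variables `c 1, ..., c (n+1)` (other indices 0). -/
noncomputable def cV (n : ℕ) : ℕ → MvPolynomial (Fin (n + 1)) ℂ := fun k =>
  if h : 1 ≤ k ∧ k ≤ n + 1 then MvPolynomial.X ⟨k - 1, by omega⟩ else 0

lemma degree_prod_aux {R : Type*} [CommRing R] {ι : Type*} (s : Finset ι)
    (a b : ι → R) [DecidablePred fun i => b i ≠ 0] :
    (∏ i ∈ s, (Polynomial.C (a i) + Polynomial.X * Polynomial.C (b i))).degree
      ≤ (((s.filter fun i => b i ≠ 0).card : ℕ) : WithBot ℕ) := by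
  classical
  induction s using Finset.cons_induction with
  | empty => simp
  | cons i s hi ih =>
    rw [Finset.prod_cons, Finset.filter_cons]
    by_cases hb : b i = 0
    · rw [if_neg (not_not.mpr hb)]
      refine (Polynomial.degree_mul_le _ _).trans ?_
      have h1 : (Polynomial.C (a i) + Polynomial.X * Polynomial.C (b i)).degree ≤ 0 := by
        rw [hb]; simp [Polynomial.degree_C_le]
      calc (Polynomial.C (a i) + Polynomial.X * Polynomial.C (b i)).degree
            + (∏ j ∈ s, (Polynomial.C (a j) + Polynomial.X * Polynomial.C (b j))).degree
          ≤ 0 + (((s.filter fun j => b j ≠ 0).card : ℕ) : WithBot ℕ) := add_le_add h1 ih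
        _ = _ := by rw [zero_add]
    · rw [if_pos hb, Finset.card_cons]
      refine (Polynomial.degree_mul_le _ _).trans ?_
      have h1 : (Polynomial.C (a i) + Polynomial.X * Polynomial.C (b i)).degree ≤ 1 := by
        refine (Polynomial.degree_add_le _ _).trans ?_
        rw [max_le_iff]
        constructor
        · exact Polynomial.degree_C_le.trans (by norm_num)
        · rw [mul_comm]; exact Polynomial.degree_C_mul_X_le _
      calc (Polynomial.C (a i) + Polynomial.X * Polynomial.C (b i)).degree
            + (∏ j ∈ s, (Polynomial.C (a j) + Polynomial.X * Polynomial.C (b j))).degree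
          ≤ 1 + (((s.filter fun j => b j ≠ 0).card : ℕ) : WithBot ℕ) := add_le_add h1 ih
        _ = _ := by push_cast; ring

lemma coeff_prod_aux_zero {R : Type*} [CommRing R] {ι : Type*} (s : Finset ι)
    (a b : ι → R) (k : ℕ) (hk : s.card < k) :
    (∏ i ∈ s, (Polynomial.C (a i) + Polynomial.X * Polynomial.C (b i))).coeff k = 0 := by
  classical
  apply Polynomial.coeff_eq_zero_of_degree_lt
  refine lt_of_le_of_lt (degree_prod_aux s a b) ?_
  exact_mod_cast lt_of_le_of_lt (Nat.cast_le.mpr (Finset.card_filter_le _ _)) (Nat.cast_lt.mpr hk)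

lemma hom_prod_aux {m : ℕ} {ι : Type*} (s : Finset ι)
    (a b : ι → MvPolynomial (Fin (m + 1)) ℂ)
    (ha : ∀ i ∈ s, (a i).IsHomogeneous 1) (hb : ∀ i ∈ s, (b i).IsHomogeneous 0) :
    ∀ k, ((∏ i ∈ s, (Polynomial.C (a i) + Polynomial.X * Polynomial.C (b i))).coeff
      k).IsHomogeneous (s.card - k) := by
  classical
  induction s using Finset.cons_induction with
  | empty =>
    intro k
    cases k with
    | zero => simpa using MvPolynomial.isHomogeneous_one _ _
    | succ k =>
      simp only [Finset.prod_empty, Polynomial.coeff_one]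
      simp only [Nat.succ_ne_zero, if_false, Finset.card_empty]
      exact MvPolynomial.isHomogeneous_zero _ _ _
  | cons i s hi ih =>
    have ha' : ∀ j ∈ s, (a j).IsHomogeneous 1 := fun j hj => ha j (Finset.mem_cons_of_mem hj)
    have hb' : ∀ j ∈ s, (b j).IsHomogeneous 0 := fun j hj => hb j (Finset.mem_cons_of_mem hj)
    have hP := ih ha' hb'
    intro k
    rw [Finset.prod_cons, Finset.card_cons, add_mul, Polynomial.coeff_add,
      Polynomial.coeff_C_mul, mul_assoc]
    have hai : (a i).IsHomogeneous 1 := ha i (Finset.mem_cons_self _ _)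
    have hbi : (b i).IsHomogeneous 0 := hb i (Finset.mem_cons_self _ _)
    cases k with
    | zero =>
      rw [Polynomial.mul_coeff_zero, Polynomial.coeff_X_zero, zero_mul, add_zero]
      have := hai.mul (hP 0)
      have heq : 1 + (s.card - 0) = s.card + 1 - 0 := by omega
      rwa [heq] at this
    | succ k =>
      rw [Polynomial.coeff_X_mul, Polynomial.coeff_C_mul]
      apply MvPolynomial.IsHomogeneous.add
      · by_cases hk : s.card < k + 1
        · rw [coeff_prod_aux_zero s a b _ hk, mul_zero]
          exact MvPolynomial.isHomogeneous_zero _ _ _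
        · have := hai.mul (hP (k + 1))
          have heq : 1 + (s.card - (k + 1)) = s.card + 1 - (k + 1) := by omega
          rwa [heq] at this
      · have := hbi.mul (hP k)
        have heq : 0 + (s.card - k) = s.card + 1 - (k + 1) := by omega
        rwa [heq] at this

lemma M0_hom (n : ℕ) (i j : Fin n) :
    (M0R (MvPolynomial (Fin (n + 1)) ℂ) (cV n) n i j).IsHomogeneous 1 := by
  unfold M0R cV
  split_ifs with h1 h2
  · exact MvPolynomial.isHomogeneous_X _ _
  · exact MvPolynomial.isHomogeneous_zero _ _ _
  · exact MvPolynomial.isHomogeneous_zero _ _ _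

lemma M1_hom (n : ℕ) (i j : Fin n) :
    (M1R (MvPolynomial (Fin (n + 1)) ℂ) n i j).IsHomogeneous 0 := by
  unfold M1R
  split_ifs
  · exact MvPolynomial.isHomogeneous_one _ _
  · exact MvPolynomial.isHomogeneous_zero _ _ _

lemma card_bound (n : ℕ) (σ : Equiv.Perm (Fin n)) :
    (Finset.univ.filter fun i : Fin n =>
      M1R (MvPolynomial (Fin (n + 1)) ℂ) n (σ i) i ≠ 0).card ≤ n - 2 := by
  classical
  have h := Finset.card_le_card_of_injOn (fun i : Fin n => (i : ℕ) - 2)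
    (s := Finset.univ.filter fun i : Fin n =>
      M1R (MvPolynomial (Fin (n + 1)) ℂ) n (σ i) i ≠ 0)
    (t := Finset.range (n - 2)) ?_ ?_
  · simpa using h
  · intro i hi
    simp only [Finset.mem_coe, Finset.mem_filter, Finset.mem_univ, true_and, Set.mem_setOf_eq, M1R] at hi
    replace hi : (if (i : ℕ) = ((σ i : Fin n) : ℕ) + 2 then (1 : MvPolynomial (Fin (n + 1)) ℂ) else 0) ≠ 0 := (Finset.mem_filter.mp (Finset.mem_coe.mp hi)).2
    rw [ne_eq, ite_eq_right_iff, not_forall] at hi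
    obtain ⟨hc, -⟩ := hi
    have h1 := (σ i).isLt
    have h2 := i.isLt
    simp only [Finset.mem_coe, Finset.mem_range]
    omega
  · intro i hi j hj hij
    simp only [Finset.mem_coe, Finset.mem_filter, Finset.mem_univ, true_and, Set.mem_setOf_eq, M1R] at hi hj
    replace hi : (if (i : ℕ) = ((σ i : Fin n) : ℕ) + 2 then (1 : MvPolynomial (Fin (n + 1)) ℂ) else 0) ≠ 0 := (Finset.mem_filter.mp (Finset.mem_coe.mp hi)).2
    replace hj : (if (j : ℕ) = ((σ j : Fin n) : ℕ) + 2 then (1 : MvPolynomial (Fin (n + 1)) ℂ) else 0) ≠ 0 := (Finset.mem_filter.mp (Finset.mem_coe.mp hj)).2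
    rw [ne_eq, ite_eq_right_iff, not_forall] at hi hj
    obtain ⟨hci, -⟩ := hi
    obtain ⟨hcj, -⟩ := hj
    simp only at hij
    exact Fin.ext (by omega)

set_option maxHeartbeats 1000000 in
/-- `det T(x)` has degree at most `n - 2` in `x`, and its coefficient of `x^k` is a
homogeneous polynomial of degree `n - k` in `c 1, ..., c (n+1)`. -/
theorem stmt7 (n : ℕ) (hn : 2 ≤ n) :
    (Matrix.det (fun i j : Fin n =>
        Polynomial.C (M0R (MvPolynomial (Fin (n + 1)) ℂ) (cV n) n i j)
          + Polynomial.X * Polynomial.C (M1R (MvPolynomial (Fin (n + 1)) ℂ) n i j))).degree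
        ≤ ((n - 2 : ℕ) : WithBot ℕ) ∧
    ∀ k : ℕ,
      ((Matrix.det (fun i j : Fin n =>
          Polynomial.C (M0R (MvPolynomial (Fin (n + 1)) ℂ) (cV n) n i j)
            + Polynomial.X * Polynomial.C (M1R (MvPolynomial (Fin (n + 1)) ℂ) n i j))).coeff
          k).IsHomogeneous (n - k) := by
    classical
  erw [Matrix.det_apply]
  constructor
  · refine (Polynomial.degree_sum_le _ _).trans ?_
    apply Finset.sup_le
    intro σ _
    rw [Units.smul_def, zsmul_eq_mul]
    refine (Polynomial.degree_mul_le _ _).trans ?_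
    have h1 : ((((Equiv.Perm.sign σ : ℤ) : Polynomial (MvPolynomial (Fin (n + 1)) ℂ))).degree) ≤ 0 :=
      Polynomial.degree_intCast_le _
    have h2 := le_trans (degree_prod_aux Finset.univ
      (fun i => M0R (MvPolynomial (Fin (n + 1)) ℂ) (cV n) n (σ i) i)
      (fun i => M1R (MvPolynomial (Fin (n + 1)) ℂ) n (σ i) i))
      (show _ ≤ ((n - 2 : ℕ) : WithBot ℕ) from Nat.cast_le.mpr (card_bound n σ))
    calc _ ≤ 0 + ((n - 2 : ℕ) : WithBot ℕ) := add_le_add h1 h2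
      _ = _ := zero_add _
  · intro k
    rw [Polynomial.finset_sum_coeff]
    apply MvPolynomial.IsHomogeneous.sum
    intro σ _
    rw [Units.smul_def, Polynomial.coeff_smul]
    have hq := hom_prod_aux Finset.univ
      (fun i => M0R (MvPolynomial (Fin (n + 1)) ℂ) (cV n) n (σ i) i)
      (fun i => M1R (MvPolynomial (Fin (n + 1)) ℂ) n (σ i) i)
      (fun i _ => M0_hom n (σ i) i) (fun i _ => M1_hom n (σ i) i) k
    rw [Finset.card_univ, Fintype.card_fin] at hq
    rw [← MvPolynomial.mem_homogeneousSubmodule] at hq ⊢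
    exact zsmul_mem hq _
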